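/- For every composition c = (c_1,…,c_m) of n with parts in {1,…,k}, the partially reversed layered permutation τ_c satisfies inv(τ_c) = Σ_{j=1}^{m} [ C(c_j − 1, 2) + c_j · (n − p_j) ], where C(i,2) = i(i−1)/2. -/

import Mathlib

/-- The partially reversed layered permutation `τ_c` associated to a composition `c`
of `n` (as a function on `{1,…,n}`, identity off that range): if `p_{j-1} < x < p_j`
then `τ_c(x) = n - x`, and `τ_c(p_j) = n - p_{j-1}`, where `p_j` are the partial
sums of `c`. -/
def prLayeredPerm {n : ℕ} (c : Composition n) (x : ℕ) : ℕ :=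
  if h : 1 ≤ x ∧ x ≤ n then
    let i := c.index ⟨x - 1, by omega⟩
    if x = c.sizeUpTo ((i : ℕ) + 1) then n - c.sizeUpTo i else n - x
  else x

/-- The number of inversions of a function `f` on `{1,…,n}`: the number of pairs
`(x,y)` with `1 ≤ x < y ≤ n` and `f x > f y`. -/
def invStat (n : ℕ) (f : ℕ → ℕ) : ℕ :=
  ((Finset.Icc 1 n ×ˢ Finset.Icc 1 n).filter
    (fun p => p.1 < p.2 ∧ f p.2 < f p.1)).card

lemma prLayered_eq {n : ℕ} (c : Composition n) (x : ℕ) (hx : 1 ≤ x) (hxn : x ≤ n)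
    (px : x - 1 < n) :
    prLayeredPerm c x =
      if x = c.sizeUpTo ((c.index ⟨x - 1, px⟩ : ℕ) + 1) then
        n - c.sizeUpTo (c.index ⟨x - 1, px⟩) else n - x := by
  unfold prLayeredPerm
  rw [dif_pos ⟨hx, hxn⟩]

lemma key {n : ℕ} (c : Composition n) (x y : ℕ) (hx : 1 ≤ x) (hxy : x < y) (hyn : y ≤ n)
    (px : x - 1 < n) (py : y - 1 < n) :
    (prLayeredPerm c y < prLayeredPerm c x ↔
      y ≠ c.sizeUpTo ((c.index ⟨x - 1, px⟩ : ℕ) + 1)) := by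
  rw [prLayered_eq c x hx (by omega) px, prLayered_eq c y (by omega) hyn py]
  set i := c.index ⟨x - 1, px⟩ with hi
  set j := c.index ⟨y - 1, py⟩ with hj
  have A1 : c.sizeUpTo i ≤ x - 1 := c.sizeUpTo_index_le ⟨x - 1, px⟩
  have A2 : x - 1 < c.sizeUpTo ((i : ℕ) + 1) := c.lt_sizeUpTo_index_succ ⟨x - 1, px⟩
  have B1 : c.sizeUpTo j ≤ y - 1 := c.sizeUpTo_index_le ⟨y - 1, py⟩
  have B2 : y - 1 < c.sizeUpTo ((j : ℕ) + 1) := c.lt_sizeUpTo_index_succ ⟨y - 1, py⟩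
  have hle : (i : ℕ) ≤ j := by
    by_contra h
    have : c.sizeUpTo ((j : ℕ) + 1) ≤ c.sizeUpTo i := c.monotone_sizeUpTo (by omega)
    omega
  have Ls1 : c.sizeUpTo ((i : ℕ) + 1) ≤ n := c.sizeUpTo_le _
  have Ls2 : c.sizeUpTo ((j : ℕ) + 1) ≤ n := c.sizeUpTo_le _
  rcases Nat.lt_or_ge (i : ℕ) (j : ℕ) with h | h
  · have hij : c.sizeUpTo ((i : ℕ) + 1) ≤ c.sizeUpTo j := c.monotone_sizeUpTo (by omega)
    split_ifs <;> omega
  · have hij : (i : ℕ) = j := by omega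
    have e1 : c.sizeUpTo (i : ℕ) = c.sizeUpTo (j : ℕ) := by rw [hij]
    have e2 : c.sizeUpTo ((i : ℕ) + 1) = c.sizeUpTo ((j : ℕ) + 1) := by rw [hij]
    split_ifs <;> omega

lemma chooseRec (m : ℕ) : (m + 1).choose 2 = m + m.choose 2 := by
  simp [Nat.choose_succ_succ]

lemma chooseAdd (a s : ℕ) : (a + s).choose 2 = a.choose 2 + a * s + s.choose 2 := by
  induction a with
  | zero => simp
  | succ a ih =>
    have e1 : a + 1 + s = (a + s) + 1 := by ring
    rw [e1, chooseRec, chooseRec]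
    have e2 : (a + 1) * s = a * s + s := by ring
    omega

lemma mySumIcc (n : ℕ) : ∑ x ∈ Finset.Icc 1 n, (n - x) = n.choose 2 := by
  induction n with
  | zero => simp
  | succ n ih =>
    rw [Finset.sum_Icc_succ_top (by omega), chooseRec]
    have e : ∑ x ∈ Finset.Icc 1 n, (n + 1 - x) = ∑ x ∈ Finset.Icc 1 n, ((n - x) + 1) := by
      refine Finset.sum_congr rfl fun x hx => ?_
      simp only [Finset.mem_Icc] at hx
      omega
    rw [e, Finset.sum_add_distrib, ih]
    simp [Nat.card_Icc]
    omega

lemma listSum (l : List ℕ) (hl : ∀ x ∈ l, 1 ≤ x) :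
    l.length ≤ l.sum ∧
    (∑ j ∈ Finset.range l.length,
        ((l.getD j 0 - 1).choose 2 + l.getD j 0 * (l.sum - (l.take (j + 1)).sum)))
      + (l.sum - l.length) = l.sum.choose 2 := by
  induction l with
  | nil => simp
  | cons a t ih =>
    obtain ⟨h1, h2⟩ := ih fun x hx => hl x (List.mem_cons_of_mem a hx)
    have ha : 1 ≤ a := hl a List.mem_cons_self
    refine ⟨by simp; omega, ?_⟩
    rw [List.length_cons, Finset.sum_range_succ']
    have e : ∀ i ∈ Finset.range t.length,
        (((a :: t).getD (i + 1) 0 - 1).choose 2 +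
          (a :: t).getD (i + 1) 0 * ((a :: t).sum - ((a :: t).take (i + 1 + 1)).sum))
        = ((t.getD i 0 - 1).choose 2 + t.getD i 0 * (t.sum - (t.take (i + 1)).sum)) := by
      intro i _
      simp only [List.getD_cons_succ, List.sum_cons, List.take_succ_cons]
      congr 1
      congr 1
      have : (t.take (i + 1)).sum + (t.drop (i + 1)).sum = t.sum := by
        rw [← List.sum_append, List.take_append_drop]
      omega
    rw [Finset.sum_congr rfl e]
    simp only [List.getD_cons_zero, List.sum_cons, List.take_succ_cons, List.take_zero,
      List.sum_nil, Nat.add_zero, Nat.add_sub_cancel_left]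
    have hca : a.choose 2 = (a - 1).choose 2 + (a - 1) := by
      obtain ⟨b, rfl⟩ : ∃ b, a = b + 1 := ⟨a - 1, by omega⟩
      rw [chooseRec]
      simp
      omega
    have hadd := chooseAdd a t.sum
    omega

/-- The partial sum of the layer containing `x`, as a total function. -/
def lastOf {n : ℕ} (c : Composition n) (x : ℕ) : ℕ :=
  if h : 1 ≤ x ∧ x ≤ n then c.sizeUpTo ((c.index ⟨x - 1, by omega⟩ : ℕ) + 1) else 0

lemma lastOf_eq {n : ℕ} (c : Composition n) (x : ℕ) (hx : 1 ≤ x) (hxn : x ≤ n)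
    (px : x - 1 < n) : lastOf c x = c.sizeUpTo ((c.index ⟨x - 1, px⟩ : ℕ) + 1) := by
  unfold lastOf
  rw [dif_pos ⟨hx, hxn⟩]

lemma le_lastOf {n : ℕ} (c : Composition n) (x : ℕ) (hx : 1 ≤ x) (hxn : x ≤ n) :
    x ≤ lastOf c x ∧ lastOf c x ≤ n := by
  have px : x - 1 < n := by omega
  rw [lastOf_eq c x hx hxn px]
  have h : x - 1 < c.sizeUpTo ((c.index ⟨x - 1, px⟩ : ℕ) + 1) :=
    c.lt_sizeUpTo_index_succ ⟨x - 1, px⟩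
  exact ⟨by omega, c.sizeUpTo_le _⟩

lemma fixedCount {n : ℕ} (c : Composition n) :
    ((Finset.Icc 1 n).filter (fun x => x = lastOf c x)).card = c.length := by
  symm
  rw [← Finset.card_range c.length]
  apply Finset.card_bij (fun j _ => c.sizeUpTo (j + 1))
  · intro j hj
    simp only [Finset.mem_range] at hj
    have h1 : c.sizeUpTo j < c.sizeUpTo (j + 1) := c.sizeUpTo_strict_mono hj
    have h2 : c.sizeUpTo (j + 1) ≤ n := c.sizeUpTo_le _
    simp only [Finset.mem_filter, Finset.mem_Icc]
    have p : c.sizeUpTo (j + 1) - 1 < n := by omega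
    refine ⟨⟨by omega, h2⟩, ?_⟩
    rw [lastOf_eq c _ (by omega) h2 p]
    have : (c.index ⟨c.sizeUpTo (j + 1) - 1, p⟩ : ℕ) = j := by
      have A : c.sizeUpTo (c.index ⟨c.sizeUpTo (j + 1) - 1, p⟩) ≤ c.sizeUpTo (j + 1) - 1 :=
        c.sizeUpTo_index_le ⟨c.sizeUpTo (j + 1) - 1, p⟩
      have B : c.sizeUpTo (j + 1) - 1 <
          c.sizeUpTo ((c.index ⟨c.sizeUpTo (j + 1) - 1, p⟩ : ℕ) + 1) :=
        c.lt_sizeUpTo_index_succ ⟨c.sizeUpTo (j + 1) - 1, p⟩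
      by_contra hne
      rcases Nat.lt_or_ge (c.index ⟨c.sizeUpTo (j + 1) - 1, p⟩ : ℕ) j with h | h
      · have : c.sizeUpTo ((c.index ⟨c.sizeUpTo (j + 1) - 1, p⟩ : ℕ) + 1) ≤ c.sizeUpTo j :=
          c.monotone_sizeUpTo (by omega)
        omega
      · have : c.sizeUpTo (j + 1) ≤ c.sizeUpTo (c.index ⟨c.sizeUpTo (j + 1) - 1, p⟩) :=
          c.monotone_sizeUpTo (by omega)
        omega
    rw [this]
  · intro j1 hj1 j2 hj2 he
    simp only [Finset.mem_range] at hj1 hj2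
    by_contra hne
    rcases Nat.lt_or_ge j1 j2 with h | h
    · have h1 : c.sizeUpTo (j1 + 1) ≤ c.sizeUpTo j2 := c.monotone_sizeUpTo (by omega)
      have h2 : c.sizeUpTo j2 < c.sizeUpTo (j2 + 1) := c.sizeUpTo_strict_mono hj2
      omega
    · have h : j2 < j1 := by omega
      have h1 : c.sizeUpTo (j2 + 1) ≤ c.sizeUpTo j1 := c.monotone_sizeUpTo (by omega)
      have h2 : c.sizeUpTo j1 < c.sizeUpTo (j1 + 1) := c.sizeUpTo_strict_mono hj1
      omega
  · intro x hx
    simp only [Finset.mem_filter, Finset.mem_Icc] at hx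
    obtain ⟨⟨hx1, hx2⟩, hfix⟩ := hx
    have px : x - 1 < n := by omega
    refine ⟨(c.index ⟨x - 1, px⟩ : ℕ), Finset.mem_range.2 (c.index ⟨x - 1, px⟩).2, ?_⟩
    rw [← lastOf_eq c x hx1 hx2 px, ← hfix]

lemma countInv {n : ℕ} (c : Composition n) :
    invStat n (prLayeredPerm c) + (n - c.length) = n.choose 2 := by
  classical
  set f := prLayeredPerm c with hf
  have h0 : invStat n f = ∑ x ∈ Finset.Icc 1 n,
      ((Finset.Icc 1 n).filter (fun y => x < y ∧ f y < f x)).card := by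
    unfold invStat
    rw [Finset.card_filter, Finset.sum_product]
    exact Finset.sum_congr rfl fun x _ => (Finset.card_filter _ _).symm
  have hper : ∀ x ∈ Finset.Icc 1 n,
      ((Finset.Icc 1 n).filter (fun y => x < y ∧ f y < f x)).card
        + (if x < lastOf c x then 1 else 0) = n - x := by
    intro x hx
    simp only [Finset.mem_Icc] at hx
    obtain ⟨hx1, hx2⟩ := hx
    have px : x - 1 < n := by omega
    have hfe : (Finset.Icc 1 n).filter (fun y => x < y ∧ f y < f x)
        = (Finset.Icc (x + 1) n).erase (lastOf c x) := by
      ext y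
      simp only [Finset.mem_filter, Finset.mem_Icc, Finset.mem_erase]
      constructor
      · rintro ⟨⟨hy1, hy2⟩, hxy, hfy⟩
        have := (key c x y hx1 hxy hy2 px (by omega)).1 hfy
        rw [← lastOf_eq c x hx1 hx2 px] at this
        exact ⟨this, by omega, hy2⟩
      · rintro ⟨hne, hy1, hy2⟩
        have hxy : x < y := by omega
        refine ⟨⟨by omega, hy2⟩, hxy, ?_⟩
        apply (key c x y hx1 hxy hy2 px (by omega)).2
        rw [← lastOf_eq c x hx1 hx2 px]
        exact hne
    rw [hfe, Finset.card_erase_eq_ite]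
    obtain ⟨hl1, hl2⟩ := le_lastOf c x hx1 hx2
    by_cases hlt : x < lastOf c x
    · rw [if_pos (Finset.mem_Icc.2 ⟨by omega, hl2⟩), if_pos hlt, Nat.card_Icc]
      omega
    · rw [if_neg (by simp only [Finset.mem_Icc]; omega), if_neg hlt, Nat.card_Icc]
      omega
  have hsum : invStat n f + ∑ x ∈ Finset.Icc 1 n, (if x < lastOf c x then 1 else 0)
      = ∑ x ∈ Finset.Icc 1 n, (n - x) := by
    rw [h0, ← Finset.sum_add_distrib]
    exact Finset.sum_congr rfl hper
  have hcard : (∑ x ∈ Finset.Icc 1 n, (if x < lastOf c x then 1 else 0))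
      = ((Finset.Icc 1 n).filter (fun x => x < lastOf c x)).card :=
    (Finset.card_filter _ _).symm
  have hsplit : ((Finset.Icc 1 n).filter (fun x => x < lastOf c x)).card
      + ((Finset.Icc 1 n).filter (fun x => x = lastOf c x)).card = n := by
    have heq : (Finset.Icc 1 n).filter (fun x => x = lastOf c x)
        = (Finset.Icc 1 n).filter (fun x => ¬ x < lastOf c x) := by
      refine Finset.filter_congr fun x hx => ?_
      simp only [Finset.mem_Icc] at hx
      obtain ⟨h1, h2⟩ := le_lastOf c x hx.1 hx.2
      constructor
      · intro h; omega
      · intro h; omega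
    rw [heq, Finset.card_filter_add_card_filter_not, Nat.card_Icc]
    omega
  have hlen := fixedCount c
  have hnn : c.length ≤ n := by
    rw [← hlen]
    exact le_trans (Finset.card_filter_le _ _) (by rw [Nat.card_Icc]; omega)
  rw [mySumIcc] at hsum
  omega

/-- For every composition `c = (c_1,…,c_m)` of `n` with parts in
`{1,…,k}`, the partially reversed layered permutation `τ_c` satisfies
`inv(τ_c) = Σ_{j=1}^m [ C(c_j - 1, 2) + c_j · (n - p_j) ]`. -/
theorem inv_prLayeredPerm (k n : ℕ) (c : Composition n) (hc : ∀ i ∈ c.blocks, i ≤ k) :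
    invStat n (prLayeredPerm c)
      = ∑ j ∈ Finset.range c.length,
          (Nat.choose (c.blocks.getD j 0 - 1) 2 +
            c.blocks.getD j 0 * (n - c.sizeUpTo (j + 1))) := by
  have h1 := countInv c
  obtain ⟨hlen, hsum⟩ := listSum c.blocks (fun x hx => c.blocks_pos hx)
  rw [c.blocks_sum, c.blocks_length] at hlen hsum
  have he : (∑ j ∈ Finset.range c.length,
      ((c.blocks.getD j 0 - 1).choose 2 + c.blocks.getD j 0 * (n - (c.blocks.take (j + 1)).sum)))
      = ∑ j ∈ Finset.range c.length,
          ((c.blocks.getD j 0 - 1).choose 2 + c.blocks.getD j 0 * (n - c.sizeUpTo (j + 1))) :=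
    Finset.sum_congr rfl fun j _ => rfl
  rw [he] at hsum
  omega
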